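/- Let N ≥ L ≥ 1, let Φ be a real N × L matrix with orthonormal columns (Φᵀ Φ = I_L), let F and D be invertible diagonal L × L matrices, and let J be an invertible L × L real matrix. Set A = Φ F J and Ã = Φ D F J, with columns y_1, ..., y_L and ỹ_1, ..., ỹ_L respectively (viewed as vectors in Euclidean space ℝ^N). Let V be a linear subspace of ℝ^N and let P denote the orthogonal projection onto V. Then (Σ_{j=1}^{L} ‖y_j − P y_j‖²) · (Σ_{j=1}^{L} ‖ỹ_j‖²) ≤ ‖J⁻¹ D⁻¹ J‖_F² · (max_{1 ≤ i ≤ L} |D(i,i)|)² · (Σ_{j=1}^{L} ‖ỹ_j − P ỹ_j‖²) · (Σ_{j=1}^{L} ‖y_j‖²). -/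

import Mathlib

set_option autoImplicit false

open Matrix

/-- With `A = Φ F J`, `Ã = Φ D F J` (Φ with orthonormal columns, `F`, `D` invertible
diagonal, `J` invertible) and `P` the orthogonal projection onto a subspace `V ⊆ ℝ^N`:
`(Σ_j ‖y_j − P y_j‖²)(Σ_j ‖ỹ_j‖²) ≤ ‖J⁻¹D⁻¹J‖_F² (max_i |D(i,i)|)²
  (Σ_j ‖ỹ_j − P ỹ_j‖²)(Σ_j ‖y_j‖²)`. -/
theorem pod_projection_transfer (N L : ℕ) (hL : 1 ≤ L) (hLN : L ≤ N)
    (Φ : Matrix (Fin N) (Fin L) ℝ) (hΦ : Φᵀ * Φ = 1)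
    (f d : Fin L → ℝ) (hf : ∀ i, f i ≠ 0) (hd : ∀ i, d i ≠ 0)
    (J : Matrix (Fin L) (Fin L) ℝ) (hJ : IsUnit J)
    (A Atil : Matrix (Fin N) (Fin L) ℝ)
    (hA : A = Φ * Matrix.diagonal f * J)
    (hAtil : Atil = Φ * Matrix.diagonal d * Matrix.diagonal f * J)
    (y ytil : Fin L → EuclideanSpace ℝ (Fin N))
    (hy : ∀ j i, y j i = A i j) (hytil : ∀ j i, ytil j i = Atil i j)
    (V : Submodule ℝ (EuclideanSpace ℝ (Fin N))) :
    (∑ j, ‖y j - (V.orthogonalProjectionOnto (y j) : EuclideanSpace ℝ (Fin N))‖ ^ 2) *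
        (∑ j, ‖ytil j‖ ^ 2) ≤
      (∑ i, ∑ j, ((J⁻¹ * (Matrix.diagonal d)⁻¹ * J) i j) ^ 2) *
        (⨆ i : Fin L, |d i|) ^ 2 *
        (∑ j, ‖ytil j - (V.orthogonalProjectionOnto (ytil j) : EuclideanSpace ℝ (Fin N))‖ ^ 2) *
        (∑ j, ‖y j‖ ^ 2) := by
  classical
  set M : Matrix (Fin L) (Fin L) ℝ := J⁻¹ * (Matrix.diagonal d)⁻¹ * J with hM
  have hJd : IsUnit J.det := (Matrix.isUnit_iff_isUnit_det J).mp hJ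
  have hJJ : J * J⁻¹ = 1 := Matrix.mul_nonsing_inv J hJd
  have hDinv : (Matrix.diagonal d)⁻¹ = Matrix.diagonal (fun i => (d i)⁻¹) := by
    apply Matrix.inv_eq_right_inv
    rw [Matrix.diagonal_mul_diagonal]
    have : (fun i => d i * (d i)⁻¹) = fun _ => (1 : ℝ) := by
      funext i; exact mul_inv_cancel₀ (hd i)
    rw [this, Matrix.diagonal_one]
  have hdfd : Matrix.diagonal d * (Matrix.diagonal f *
      Matrix.diagonal (fun i => (d i)⁻¹)) = Matrix.diagonal f := by
    rw [Matrix.diagonal_mul_diagonal, Matrix.diagonal_mul_diagonal]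
    have hfun : (fun i => d i * (f i * (d i)⁻¹)) = f := by
      funext i
      rw [mul_comm (f i), ← mul_assoc, mul_inv_cancel₀ (hd i), one_mul]
    rw [hfun]
  -- A = Atil * M
  have hAM : A = Atil * M := by
    rw [hA, hAtil, hM, hDinv]
    simp only [Matrix.mul_assoc]
    rw [← Matrix.mul_assoc J J⁻¹, hJJ, Matrix.one_mul,
        ← Matrix.mul_assoc (Matrix.diagonal f) (Matrix.diagonal fun i => (d i)⁻¹),
        ← Matrix.mul_assoc (Matrix.diagonal d)
          (Matrix.diagonal f * Matrix.diagonal fun i => (d i)⁻¹),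
        hdfd]
  -- y j as a combination of the ytil k
  have hyM : ∀ j, y j = ∑ k, M k j • ytil k := by
    intro j
    ext i
    have h0 : A i j = ∑ k, Atil i k * M k j := by rw [hAM, Matrix.mul_apply]
    calc y j i = ∑ k, Atil i k * M k j := by rw [hy, h0]
      _ = ∑ k, M k j * ytil k i := by
          refine Finset.sum_congr rfl fun k _ => ?_
          rw [hytil, mul_comm]
      _ = ∑ k, EuclideanSpace.proj (𝕜 := ℝ) i (M k j • ytil k) := by
          simp [smul_eq_mul]
      _ = EuclideanSpace.proj (𝕜 := ℝ) i (∑ k, M k j • ytil k) :=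
          (map_sum (EuclideanSpace.proj (𝕜 := ℝ) i) _ _).symm
      _ = (∑ k, M k j • ytil k) i := rfl
  -- the "residual" operator
  set T : EuclideanSpace ℝ (Fin N) →L[ℝ] EuclideanSpace ℝ (Fin N) :=
    ContinuousLinearMap.id ℝ _ - V.subtypeL.comp (V.orthogonalProjectionOnto) with hTdef
  have hT : ∀ x : EuclideanSpace ℝ (Fin N),
      T x = x - (V.orthogonalProjectionOnto x : EuclideanSpace ℝ (Fin N)) := fun x => rfl
  -- step 1 : pointwise Cauchy-Schwarz bound
  have step1 : ∀ j, ‖T (y j)‖ ^ 2 ≤ (∑ k, (M k j) ^ 2) * (∑ k, ‖T (ytil k)‖ ^ 2) := by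
    intro j
    have h1 : ‖T (y j)‖ ≤ ∑ k, |M k j| * ‖T (ytil k)‖ := by
      rw [hyM j, map_sum]
      refine (norm_sum_le _ _).trans ?_
      refine Finset.sum_le_sum fun k _ => ?_
      rw [T.map_smul, norm_smul, Real.norm_eq_abs]
    calc ‖T (y j)‖ ^ 2 ≤ (∑ k, |M k j| * ‖T (ytil k)‖) ^ 2 :=
          pow_le_pow_left₀ (norm_nonneg _) h1 2
      _ ≤ (∑ k, |M k j| ^ 2) * (∑ k, ‖T (ytil k)‖ ^ 2) :=
          Finset.sum_mul_sq_le_sq_mul_sq _ _ _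
      _ = (∑ k, (M k j) ^ 2) * (∑ k, ‖T (ytil k)‖ ^ 2) := by
          simp [sq_abs]
  have S1 : ∑ j, ‖T (y j)‖ ^ 2 ≤
      (∑ i, ∑ j, (M i j) ^ 2) * (∑ k, ‖T (ytil k)‖ ^ 2) := by
    calc ∑ j, ‖T (y j)‖ ^ 2
        ≤ ∑ j, (∑ k, (M k j) ^ 2) * (∑ k, ‖T (ytil k)‖ ^ 2) :=
          Finset.sum_le_sum fun j _ => step1 j
      _ = (∑ j, ∑ k, (M k j) ^ 2) * (∑ k, ‖T (ytil k)‖ ^ 2) := by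
          rw [Finset.sum_mul]
      _ = (∑ i, ∑ j, (M i j) ^ 2) * (∑ k, ‖T (ytil k)‖ ^ 2) := by
          rw [Finset.sum_comm]
  -- norms as sums of squares
  have norm_sq : ∀ x : EuclideanSpace ℝ (Fin N), ‖x‖ ^ 2 = ∑ i, (x i) ^ 2 := by
    intro x
    rw [EuclideanSpace.norm_eq, Real.sq_sqrt (by positivity)]
    simp [sq_abs]
  -- Frobenius isometry for Φ
  have frob : ∀ (X : Matrix (Fin L) (Fin L) ℝ) (j : Fin L),
      ∑ i, ((Φ * X) i j) ^ 2 = ∑ i, (X i j) ^ 2 := by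
    intro X j
    have h1 : (Φ * X)ᵀ * (Φ * X) = Xᵀ * X := by
      rw [Matrix.transpose_mul, Matrix.mul_assoc, ← Matrix.mul_assoc Φᵀ, hΦ,
        Matrix.one_mul]
    have h2 := congrFun (congrFun h1 j) j
    simpa [Matrix.mul_apply, Matrix.transpose_apply, sq, mul_comm] using h2
  set X : Matrix (Fin L) (Fin L) ℝ := Matrix.diagonal f * J with hX
  have hAX : A = Φ * X := by rw [hA, hX, Matrix.mul_assoc]
  have hAtilX : Atil = Φ * (Matrix.diagonal d * X) := by
    rw [hAtil, hX]
    simp only [Matrix.mul_assoc]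
  -- supremum bound
  have hbdd : BddAbove (Set.range fun i : Fin L => |d i|) :=
    (Set.finite_range _).bddAbove
  have hsup_le : ∀ i, |d i| ≤ ⨆ i, |d i| := fun i => le_ciSup hbdd i
  have hsup_nonneg : 0 ≤ ⨆ i, |d i| :=
    le_trans (abs_nonneg _) (hsup_le ⟨0, hL⟩)
  -- Σ‖ỹ‖² ≤ sup² Σ‖y‖²
  have hb : ∑ j, ‖ytil j‖ ^ 2 ≤ (⨆ i, |d i|) ^ 2 * ∑ j, ‖y j‖ ^ 2 := by
    have hyt : ∑ j, ‖ytil j‖ ^ 2 = ∑ j, ∑ i, (d i * X i j) ^ 2 := by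
      calc ∑ j, ‖ytil j‖ ^ 2 = ∑ j, ∑ i, (Atil i j) ^ 2 := by
            simp only [norm_sq, hytil]
        _ = ∑ j, ∑ i, ((Matrix.diagonal d * X) i j) ^ 2 := by
            rw [hAtilX]; simp only [frob]
        _ = ∑ j, ∑ i, (d i * X i j) ^ 2 := by
            simp [Matrix.diagonal_mul]
    have hyy : ∑ j, ‖y j‖ ^ 2 = ∑ j, ∑ i, (X i j) ^ 2 := by
      calc ∑ j, ‖y j‖ ^ 2 = ∑ j, ∑ i, (A i j) ^ 2 := by
            simp only [norm_sq, hy]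
        _ = ∑ j, ∑ i, (X i j) ^ 2 := by rw [hAX]; simp only [frob]
    rw [hyt, hyy, Finset.mul_sum]
    refine Finset.sum_le_sum fun j _ => ?_
    rw [Finset.mul_sum]
    refine Finset.sum_le_sum fun i _ => ?_
    rw [mul_pow]
    have : (d i) ^ 2 ≤ (⨆ i, |d i|) ^ 2 := by
      rw [← sq_abs]
      exact pow_le_pow_left₀ (abs_nonneg _) (hsup_le i) 2
    exact mul_le_mul_of_nonneg_right this (sq_nonneg _)
  -- combine
  have key : (∑ j, ‖T (y j)‖ ^ 2) * (∑ j, ‖ytil j‖ ^ 2) ≤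
      ((∑ i, ∑ j, (M i j) ^ 2) * (∑ k, ‖T (ytil k)‖ ^ 2)) *
        ((⨆ i, |d i|) ^ 2 * ∑ j, ‖y j‖ ^ 2) := by
    refine mul_le_mul S1 hb (by positivity) ?_
    have h1 : (0:ℝ) ≤ ∑ i, ∑ j, (M i j) ^ 2 := by positivity
    have h2 : (0:ℝ) ≤ ∑ k, ‖T (ytil k)‖ ^ 2 := by positivity
    exact mul_nonneg h1 h2
  calc (∑ j, ‖y j - (V.orthogonalProjectionOnto (y j) : EuclideanSpace ℝ (Fin N))‖ ^ 2) *
        (∑ j, ‖ytil j‖ ^ 2)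
      = (∑ j, ‖T (y j)‖ ^ 2) * (∑ j, ‖ytil j‖ ^ 2) := by
        simp only [hT]
    _ ≤ ((∑ i, ∑ j, (M i j) ^ 2) * (∑ k, ‖T (ytil k)‖ ^ 2)) *
        ((⨆ i, |d i|) ^ 2 * ∑ j, ‖y j‖ ^ 2) := key
    _ = (∑ i, ∑ j, ((J⁻¹ * (Matrix.diagonal d)⁻¹ * J) i j) ^ 2) *
        (⨆ i : Fin L, |d i|) ^ 2 *
        (∑ j, ‖ytil j - (V.orthogonalProjectionOnto (ytil j) : EuclideanSpace ℝ (Fin N))‖ ^ 2) *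
        (∑ j, ‖y j‖ ^ 2) := by
        simp only [hT, ← hM]
        ring
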